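/- Conversely, for a weighted CFG (G, θ) with nonnegative weights, the PMTA A_G of dimension |V| + |Σ| constructed with λ = e_1 (indicator of the start symbol), μ_σ = e_{ι(σ)} for terminals σ, and μ_? encoding θ on rule coordinates, satisfies: for every skeletal tree t ∈ S(T(G)), W_G(t) = A_G(t). -/

import Mathlib

/-- Skeletal trees over leaf symbols `Sig0`. -/
inductive Sk (Sig0 : Type) : Type
  | leaf : Sig0 → Sk Sig0
  | node : List (Sk Sig0) → Sk Sig0

/-- Bottom-up evaluation of a skeletal tree by a multiplicity tree automaton
of dimension `d` given by leaf vectors `μleaf` and coefficients `coef`. -/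
noncomputable def Sk.eval {Sig0 : Type} {d : ℕ}
    (μleaf : Sig0 → Fin d → ℝ) (coef : Fin d → List (Fin d) → ℝ) :
    Sk Sig0 → Fin d → ℝ
  | .leaf a => μleaf a
  | .node ts => fun i =>
      ∑ g : Fin ts.length → Fin d,
        coef i (List.ofFn g) *
          ∏ j : Fin ts.length, Sk.eval μleaf coef (ts.get j) (g j)
decreasing_by
  have hm : ts.get j ∈ ts := by simp
  have := List.sizeOf_lt_of_mem hm
  simp only [Sk.node.sizeOf_spec]
  omega

/-- Derivation trees of a CFG: leaves are terminals, internal nodes are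
labeled by non-terminals. -/
inductive DTree (V Sig : Type) : Type
  | leaf : Sig → DTree V Sig
  | node : V → List (DTree V Sig) → DTree V Sig

namespace DTree

def rootSym {V Sig : Type} : DTree V Sig → V ⊕ Sig
  | .leaf a => .inr a
  | .node A _ => .inl A

/-- The skeletal form of a derivation tree. -/
def skel {V Sig : Type} : DTree V Sig → Sk Sig
  | .leaf a => .leaf a
  | .node _ ts => .node (ts.attach.map (fun x => skel x.1))
decreasing_by
  have := List.sizeOf_lt_of_mem x.2
  simp only [DTree.node.sizeOf_spec]
  omega

/-- Validity of a derivation tree w.r.t. production rules `R`. -/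
inductive Valid {V Sig : Type} (R : V → List (V ⊕ Sig) → Prop) : DTree V Sig → Prop
  | leaf (a : Sig) : Valid R (.leaf a)
  | node (A : V) (ts : List (DTree V Sig)) :
      R A (ts.map rootSym) → (∀ t, t ∈ ts → Valid R t) →
      Valid R (.node A ts)

/-- The weight of a derivation tree: the product of the weights of the
rules used at its nodes. -/
def wt {V Sig : Type} (θ : V → List (V ⊕ Sig) → ℝ) : DTree V Sig → ℝ
  | .leaf _ => 1
  | .node A ts => θ A (ts.map rootSym) * (ts.attach.map (fun x => wt θ x.1)).prod
decreasing_by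
  have := List.sizeOf_lt_of_mem x.2
  simp only [DTree.node.sizeOf_spec]
  omega

end DTree

section Construction

variable {nV nSig : ℕ}

/-- The leaf vectors of the PMTA `A_G` constructed from a WCFG:
`μ_σ = e_{ι(σ)}`. -/
def muLeafG (nV : ℕ) : Fin nSig → Fin (nV + nSig) → ℝ :=
  fun a i => if i = finSumFinEquiv (Sum.inr a) then 1 else 0

/-- The transition coefficients of `A_G`: on non-terminal coordinates they
encode `θ`, and they vanish on terminal coordinates. -/
def coefG (θ : Fin nV → List (Fin nV ⊕ Fin nSig) → ℝ) :
    Fin (nV + nSig) → List (Fin (nV + nSig)) → ℝ :=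
  fun i l =>
    match finSumFinEquiv.symm i with
    | Sum.inl A => θ A (l.map (fun j => finSumFinEquiv.symm j))
    | Sum.inr _ => 0

/-- The output vector of `A_G`: the indicator of the start symbol. -/
def lamG (nSig : ℕ) (S₀ : Fin nV) : Fin (nV + nSig) → ℝ :=
  fun i => if i = finSumFinEquiv (Sum.inl S₀) then 1 else 0

end Construction

open DTree in
/-- The weight a WCFG assigns to a skeletal tree `s`: the sum of the weights
of all valid derivation trees from the start symbol with skeletal form `s`. -/
noncomputable def WG {nV nSig : ℕ}
    (R : Fin nV → List (Fin nV ⊕ Fin nSig) → Prop)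
    (θ : Fin nV → List (Fin nV ⊕ Fin nSig) → ℝ)
    (S₀ : Fin nV) (s : Sk (Fin nSig)) : ℝ :=
  ∑' dt : {dt : DTree (Fin nV) (Fin nSig) //
      Valid R dt ∧ rootSym dt = Sum.inl S₀ ∧ skel dt = s},
    wt θ (dt : DTree (Fin nV) (Fin nSig))


section AuxProof

open DTree

variable {nV nSig : ℕ}

lemma skel_leaf' {V Sig : Type} (a : Sig) :
    DTree.skel (DTree.leaf a : DTree V Sig) = Sk.leaf a := by
  simp [DTree.skel]

lemma skel_node' {V Sig : Type} (A : V) (cs : List (DTree V Sig)) :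
    DTree.skel (DTree.node A cs) = Sk.node (cs.map DTree.skel) := by
  rw [DTree.skel, List.attach_map_val]

lemma wt_leaf' {V Sig : Type} (θ : V → List (V ⊕ Sig) → ℝ) (a : Sig) :
    DTree.wt θ (DTree.leaf a) = 1 := by
  simp [DTree.wt]

lemma wt_node' {V Sig : Type} (θ : V → List (V ⊕ Sig) → ℝ) (A : V) (cs : List (DTree V Sig)) :
    DTree.wt θ (DTree.node A cs) = θ A (cs.map rootSym) * (cs.map (DTree.wt θ)).prod := by
  rw [DTree.wt, List.attach_map_val]

/-- Build a derivation tree with a given node skeleton from a root label and children. -/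
def mkNode (ts : List (Sk (Fin nSig)))
    (p : Fin nV × ∀ j : Fin ts.length,
        {dt : DTree (Fin nV) (Fin nSig) // DTree.skel dt = ts.get j}) :
    {dt : DTree (Fin nV) (Fin nSig) // DTree.skel dt = Sk.node ts} :=
  ⟨.node p.1 (List.ofFn fun j => (p.2 j).1), by
    rw [skel_node', List.map_ofFn]
    congr 1
    have h : (DTree.skel ∘ fun j => (p.2 j).1) = fun j => ts.get j := by
      funext j; exact (p.2 j).2
    rw [h, List.ofFn_get]⟩

lemma mkNode_bijective (ts : List (Sk (Fin nSig))) :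
    Function.Bijective (mkNode (nV := nV) ts) := by
  constructor
  · rintro ⟨A, c⟩ ⟨A', c'⟩ h
    simp only [mkNode, Subtype.mk.injEq, DTree.node.injEq, List.ofFn_inj] at h
    obtain ⟨rfl, h2⟩ := h
    simp only [Prod.mk.injEq, true_and]
    funext j
    exact Subtype.ext (congrFun h2 j)
  · rintro ⟨dt, h⟩
    cases dt with
    | leaf a => rw [skel_leaf'] at h; exact absurd h (by simp)
    | node A cs =>
      rw [skel_node'] at h
      have hm : cs.map DTree.skel = ts := by injection h
      subst hm
      have hlen : cs.length = (cs.map DTree.skel).length := by simp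
      refine ⟨⟨A, fun j => ⟨cs.get (Fin.cast hlen.symm j), ?_⟩⟩, ?_⟩
      · simp only [List.get_eq_getElem, List.getElem_map, Fin.coe_cast]
      · apply Subtype.ext
        simp only [mkNode]
        congr 1
        apply List.ext_get
        · simp
        · intro k h1 h2
          simp [List.get_ofFn]

/-- The set of derivation trees with a given skeleton is finite. -/
noncomputable def allFintype :
    (s : Sk (Fin nSig)) → Fintype {dt : DTree (Fin nV) (Fin nSig) // DTree.skel dt = s}
  | .leaf a =>
    ⟨{⟨.leaf a, skel_leaf' a⟩}, by
      rintro ⟨dt, h⟩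
      cases dt with
      | leaf b =>
        rw [skel_leaf'] at h
        obtain rfl : b = a := by injection h
        simp
      | node A cs => rw [skel_node'] at h; exact absurd h (by simp)⟩
  | .node ts =>
    letI : ∀ j : Fin ts.length,
        Fintype {dt : DTree (Fin nV) (Fin nSig) // DTree.skel dt = ts.get j} :=
      fun j => allFintype (ts.get j)
    Fintype.ofBijective _ (mkNode_bijective ts)
decreasing_by
  have hm : ts.get j ∈ ts := by simp
  have := List.sizeOf_lt_of_mem hm
  simp only [Sk.node.sizeOf_spec]
  omega

theorem wt_zero (R : Fin nV → List (Fin nV ⊕ Fin nSig) → Prop)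
    (θ : Fin nV → List (Fin nV ⊕ Fin nSig) → ℝ)
    (hsupp : ∀ A α, ¬ R A α → θ A α = 0) :
    ∀ dt : DTree (Fin nV) (Fin nSig), ¬ DTree.Valid R dt → DTree.wt θ dt = 0
  | .leaf a => fun h => absurd (DTree.Valid.leaf a) h
  | .node A cs => fun h => by
    rw [wt_node']
    by_cases hR : R A (cs.map DTree.rootSym)
    · have hna : ¬ ∀ t ∈ cs, DTree.Valid R t := fun hall => h (DTree.Valid.node A cs hR hall)
      push_neg at hna
      obtain ⟨t, ht, hnv⟩ := hna
      have h0 : DTree.wt θ t = 0 := wt_zero R θ hsupp t hnv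
      have hz : (0:ℝ) ∈ cs.map (DTree.wt θ) := by
        rw [← h0]; exact List.mem_map_of_mem ht
      rw [List.prod_eq_zero hz, mul_zero]
    · rw [hsupp _ _ hR, zero_mul]
decreasing_by
  have := List.sizeOf_lt_of_mem ht
  simp only [DTree.node.sizeOf_spec]
  omega

theorem evalG_eq (θ : Fin nV → List (Fin nV ⊕ Fin nSig) → ℝ) :
    ∀ (s : Sk (Fin nSig)) (i : Fin (nV + nSig)),
      Sk.eval (muLeafG nV) (coefG θ) s i =
        ∑' dt : {dt : DTree (Fin nV) (Fin nSig) // DTree.skel dt = s},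
          (if DTree.rootSym dt.1 = finSumFinEquiv.symm i then DTree.wt θ dt.1 else 0)
  | .leaf a, i => by
    letI : Unique {dt : DTree (Fin nV) (Fin nSig) // DTree.skel dt = Sk.leaf a} :=
      ⟨⟨⟨.leaf a, skel_leaf' a⟩⟩, by
        rintro ⟨dt, h⟩
        cases dt with
        | leaf b =>
          rw [skel_leaf'] at h
          obtain rfl : b = a := by injection h
          exact Subtype.ext rfl
        | node A cs => rw [skel_node'] at h; exact absurd h (by simp)⟩
    rw [tsum_eq_single default (fun b hb => absurd (Unique.eq_default b) hb), Sk.eval]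
    have hd : (default : {dt : DTree (Fin nV) (Fin nSig) // DTree.skel dt = Sk.leaf a})
        = ⟨.leaf a, skel_leaf' a⟩ := rfl
    rw [hd]
    show muLeafG nV a i = if DTree.rootSym (DTree.leaf a) = finSumFinEquiv.symm i then
      DTree.wt θ (DTree.leaf a) else 0
    rw [wt_leaf']
    simp only [muLeafG, DTree.rootSym]
    by_cases hc : i = finSumFinEquiv (Sum.inr a)
    · rw [if_pos hc]; exact Eq.symm (if_pos (show Sum.inr a = finSumFinEquiv.symm i by rw [hc]; simp))
    · rw [if_neg hc]; exact Eq.symm (if_neg (show ¬ (Sum.inr a = finSumFinEquiv.symm i) from fun hc2 => hc (by rw [hc2]; simp)))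
  | .node ts, i => by
    letI : ∀ j : Fin ts.length,
        Fintype {dt : DTree (Fin nV) (Fin nSig) // DTree.skel dt = ts.get j} :=
      fun j => allFintype _
    letI : Fintype {dt : DTree (Fin nV) (Fin nSig) // DTree.skel dt = Sk.node ts} :=
      allFintype _
    rw [tsum_fintype, Sk.eval]
    rcases hi : finSumFinEquiv.symm i with A | b
    · -- nonterminal index: the main computation
      have hcoef : ∀ l, coefG θ i l = θ A (l.map (fun j => finSumFinEquiv.symm j)) := by
        intro l; simp only [coefG, hi]
      have IH : ∀ (j : Fin ts.length) (u : Fin nV ⊕ Fin nSig),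
          Sk.eval (muLeafG nV) (coefG θ) (ts.get j) (finSumFinEquiv u) =
            ∑ x : {dt : DTree (Fin nV) (Fin nSig) // DTree.skel dt = ts.get j},
              (if DTree.rootSym x.1 = u then DTree.wt θ x.1 else 0) := by
        intro j u
        rw [evalG_eq θ (ts.get j) (finSumFinEquiv u), tsum_fintype]
        simp only [Equiv.symm_apply_apply]
      calc (∑ g : Fin ts.length → Fin (nV + nSig),
              coefG θ i (List.ofFn g) *
                ∏ j : Fin ts.length, Sk.eval (muLeafG nV) (coefG θ) (ts.get j) (g j))
          = ∑ h : Fin ts.length → Fin nV ⊕ Fin nSig,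
              θ A (List.ofFn h) *
                ∏ j : Fin ts.length,
                  Sk.eval (muLeafG nV) (coefG θ) (ts.get j) (finSumFinEquiv (h j)) := by
            rw [← Equiv.sum_comp
              (Equiv.piCongrRight fun _ : Fin ts.length => finSumFinEquiv)
              (fun g => coefG θ i (List.ofFn g) *
                ∏ j : Fin ts.length, Sk.eval (muLeafG nV) (coefG θ) (ts.get j) (g j))]
            apply Finset.sum_congr rfl
            intro h _
            have he : ∀ j, (Equiv.piCongrRight fun _ : Fin ts.length => finSumFinEquiv) h j
                = finSumFinEquiv (h j) := fun j => rfl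
            rw [hcoef]
            congr 1
            · congr 1
              simp only [List.map_ofFn]
              congr 1
              funext j
              simp [he]
        _ = ∑ h : Fin ts.length → Fin nV ⊕ Fin nSig,
              θ A (List.ofFn h) *
                ∑ c ∈ Fintype.piFinset (fun j : Fin ts.length =>
                    (Finset.univ : Finset {dt : DTree (Fin nV) (Fin nSig) //
                      DTree.skel dt = ts.get j})),
                  ∏ j : Fin ts.length,
                    (if DTree.rootSym (c j).1 = h j then DTree.wt θ (c j).1 else 0) := by
            apply Finset.sum_congr rfl
            intro h _
            congr 1
            rw [Finset.prod_congr rfl (fun j _ => IH j (h j))]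
            exact Finset.prod_univ_sum (fun j : Fin ts.length => Finset.univ)
              (fun (j : Fin ts.length)
                  (x : {dt : DTree (Fin nV) (Fin nSig) // DTree.skel dt = ts.get j}) =>
                if DTree.rootSym x.1 = h j then DTree.wt θ x.1 else 0)
        _ = ∑ h : Fin ts.length → Fin nV ⊕ Fin nSig,
              ∑ c : (∀ j : Fin ts.length,
                  {dt : DTree (Fin nV) (Fin nSig) // DTree.skel dt = ts.get j}),
                θ A (List.ofFn h) *
                  ∏ j : Fin ts.length,
                    (if DTree.rootSym (c j).1 = h j then DTree.wt θ (c j).1 else 0) := by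
            simp only [Fintype.piFinset_univ, Finset.mul_sum]
        _ = ∑ c : (∀ j : Fin ts.length,
                  {dt : DTree (Fin nV) (Fin nSig) // DTree.skel dt = ts.get j}),
              ∑ h : Fin ts.length → Fin nV ⊕ Fin nSig,
                θ A (List.ofFn h) *
                  ∏ j : Fin ts.length,
                    (if DTree.rootSym (c j).1 = h j then DTree.wt θ (c j).1 else 0) := by
            exact Finset.sum_comm
        _ = ∑ c : (∀ j : Fin ts.length,
                  {dt : DTree (Fin nV) (Fin nSig) // DTree.skel dt = ts.get j}),
              θ A (List.ofFn fun j => DTree.rootSym (c j).1) *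
                ∏ j : Fin ts.length, DTree.wt θ (c j).1 := by
            apply Finset.sum_congr rfl
            intro c _
            have hp : ∀ h : Fin ts.length → Fin nV ⊕ Fin nSig,
                (∏ j : Fin ts.length,
                    (if DTree.rootSym (c j).1 = h j then DTree.wt θ (c j).1 else 0)) =
                  if h = (fun j => DTree.rootSym (c j).1) then
                    ∏ j : Fin ts.length, DTree.wt θ (c j).1 else 0 := by
              intro h
              by_cases hh : h = fun j => DTree.rootSym (c j).1
              · subst hh; simp
              · rw [if_neg hh]
                obtain ⟨j, hj⟩ := Function.ne_iff.mp hh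
                exact Finset.prod_eq_zero (Finset.mem_univ j)
                  (if_neg (fun hc => hj hc.symm))
            calc (∑ h : Fin ts.length → Fin nV ⊕ Fin nSig,
                    θ A (List.ofFn h) *
                      ∏ j : Fin ts.length,
                        (if DTree.rootSym (c j).1 = h j then DTree.wt θ (c j).1 else 0))
                = ∑ h : Fin ts.length → Fin nV ⊕ Fin nSig,
                    (if h = (fun j => DTree.rootSym (c j).1) then
                      θ A (List.ofFn h) * ∏ j : Fin ts.length, DTree.wt θ (c j).1 else 0) := by
                  apply Finset.sum_congr rfl
                  intro h _
                  rw [hp h, mul_ite, mul_zero]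
              _ = _ := by
                  rw [Finset.sum_ite_eq' Finset.univ (fun j => DTree.rootSym (c j).1)
                    (fun h => θ A (List.ofFn h) * ∏ j : Fin ts.length, DTree.wt θ (c j).1)]
                  simp
        _ = ∑ dt : {dt : DTree (Fin nV) (Fin nSig) // DTree.skel dt = Sk.node ts},
              (if DTree.rootSym dt.1 = Sum.inl A then DTree.wt θ dt.1 else 0) := by
            rw [← Fintype.sum_bijective (mkNode ts) (mkNode_bijective ts)
              (fun p => if DTree.rootSym (mkNode ts p).1 = Sum.inl A then
                DTree.wt θ (mkNode ts p).1 else 0) _ (fun p => rfl)]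
            rw [Fintype.sum_prod_type_right]
            apply Finset.sum_congr rfl
            intro c _
            have hroot : ∀ A' : Fin nV, DTree.rootSym (mkNode ts (A', c)).1 = Sum.inl A' :=
              fun A' => rfl
            have hwt : ∀ A' : Fin nV, DTree.wt θ (mkNode ts (A', c)).1 =
                θ A' (List.ofFn fun j => DTree.rootSym (c j).1) *
                  ∏ j : Fin ts.length, DTree.wt θ (c j).1 := by
              intro A'
              show DTree.wt θ (DTree.node A' (List.ofFn fun j => (c j).1)) = _
              rw [wt_node', List.map_ofFn, List.map_ofFn, List.prod_ofFn]
              rfl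
            calc θ A (List.ofFn fun j => DTree.rootSym (c j).1) *
                  ∏ j : Fin ts.length, DTree.wt θ (c j).1
                = ∑ A' : Fin nV, (if A' = A then
                    θ A' (List.ofFn fun j => DTree.rootSym (c j).1) *
                      ∏ j : Fin ts.length, DTree.wt θ (c j).1 else 0) := by
                  rw [Finset.sum_ite_eq' Finset.univ A]
                  simp
              _ = _ := by
                  apply Finset.sum_congr rfl
                  intro A' _
                  rw [hroot A', hwt A']
                  congr 1
                  simp [Sum.inl.injEq]
    · -- terminal index: both sides vanish
      have hL : ∀ g : Fin ts.length → Fin (nV + nSig), coefG θ i (List.ofFn g) = 0 := by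
        intro g; simp only [coefG, hi]
      simp only [hL, zero_mul, Finset.sum_const_zero]
      symm
      apply Finset.sum_eq_zero
      rintro ⟨dt, h⟩ -
      cases dt with
      | leaf a => rw [skel_leaf'] at h; exact absurd h (by simp)
      | node A cs =>
        rw [if_neg]
        simp [DTree.rootSym]
decreasing_by
  have hm : ts.get j ∈ ts := by simp
  have := List.sizeOf_lt_of_mem hm
  simp only [Sk.node.sizeOf_spec]
  omega

end AuxProof

theorem stmt_13 {nV nSig : ℕ}
    (R : Fin nV → List (Fin nV ⊕ Fin nSig) → Prop)
    (θ : Fin nV → List (Fin nV ⊕ Fin nSig) → ℝ)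
    (S₀ : Fin nV)
    (hθ : ∀ A α, 0 ≤ θ A α)
    (hsupp : ∀ A α, ¬ R A α → θ A α = 0) :
    -- on every skeletal tree of the grammar, the grammar weight equals the
    -- value computed by the constructed PMTA `A_G`
    ∀ s : Sk (Fin nSig),
      (∃ dt : DTree (Fin nV) (Fin nSig),
          DTree.Valid R dt ∧ DTree.rootSym dt = Sum.inl S₀ ∧ DTree.skel dt = s) →
      WG R θ S₀ s =
        ∑ i, lamG nSig S₀ i * Sk.eval (muLeafG nV) (coefG θ) s i := by
  intro s _
  classical
  set f : DTree (Fin nV) (Fin nSig) → ℝ := fun dt =>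
    if DTree.rootSym dt = Sum.inl S₀ ∧ DTree.skel dt = s then DTree.wt θ dt else 0 with hf
  have hsub1 : Function.support f ⊆
      {dt | DTree.Valid R dt ∧ DTree.rootSym dt = Sum.inl S₀ ∧ DTree.skel dt = s} := by
    intro dt hdt
    simp only [Function.mem_support, hf] at hdt
    by_cases hc : DTree.rootSym dt = Sum.inl S₀ ∧ DTree.skel dt = s
    · refine ⟨?_, hc.1, hc.2⟩
      by_contra hv
      rw [if_pos hc] at hdt
      exact hdt (wt_zero R θ hsupp dt hv)
    · rw [if_neg hc] at hdt
      exact absurd rfl hdt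
  have hsub2 : Function.support f ⊆ {dt | DTree.skel dt = s} := by
    intro dt hdt
    simp only [Function.mem_support, hf] at hdt
    by_cases hc : DTree.rootSym dt = Sum.inl S₀ ∧ DTree.skel dt = s
    · exact hc.2
    · rw [if_neg hc] at hdt
      exact absurd rfl hdt
  have h1 : WG R θ S₀ s = ∑' dt, f dt := by
    rw [WG, ← tsum_subtype_eq_of_support_subset hsub1]
    apply tsum_congr
    rintro ⟨dt, hv, h2, h3⟩
    simp [hf, h2, h3]
  have h2 : (∑ i, lamG nSig S₀ i * Sk.eval (muLeafG nV) (coefG θ) s i)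
      = Sk.eval (muLeafG nV) (coefG θ) s (finSumFinEquiv (Sum.inl S₀)) := by
    simp [lamG, ite_mul, zero_mul, one_mul]
    rw [Finset.sum_eq_single (Fin.castAdd nSig S₀) (fun b _ hb => mul_eq_zero_of_left (if_neg hb) _) (fun h => absurd (Finset.mem_univ _) h)]
    show (if (Fin.castAdd nSig S₀ : Fin (nV + nSig)) = finSumFinEquiv (Sum.inl S₀) then (1:ℝ) else 0) * _ = _
    rw [if_pos (show (Fin.castAdd nSig S₀ : Fin (nV + nSig)) = finSumFinEquiv (Sum.inl S₀) by simp), one_mul]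
  have h3 : (∑' dt : {dt : DTree (Fin nV) (Fin nSig) // DTree.skel dt = s},
      (if DTree.rootSym dt.1 = finSumFinEquiv.symm (finSumFinEquiv (Sum.inl S₀)) then
        DTree.wt θ dt.1 else 0))
      = ∑' dt : {dt : DTree (Fin nV) (Fin nSig) // DTree.skel dt = s}, f dt.1 := by
    apply tsum_congr
    rintro ⟨dt, hsk⟩
    simp only [Equiv.symm_apply_apply, hf]
    by_cases hc : DTree.rootSym dt = Sum.inl S₀
    · rw [if_pos hc, if_pos ⟨hc, hsk⟩]
    · rw [if_neg hc, if_neg (fun hx => hc hx.1)]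
  rw [h1, h2, evalG_eq θ s (finSumFinEquiv (Sum.inl S₀)), h3]
  exact (tsum_subtype_eq_of_support_subset hsub2).symm
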